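/- Let D be a real graded division algebra with ℂ ≅ D_e not contained in Z(D), admitting a degree-preserving involution φ_0 restricting to conjugation on D_e. Then for every t ∈ T∖K, the element X_t² is central in D, where K = {t ∈ T | Int(X_t)|_{D_e} = id}. -/

import Mathlib

variable {G : Type*} [CommGroup G] [DecidableEq G] {D : Type*} [Ring D] [Algebra ℝ D]

/-- A real graded division algebra. -/
def IsGDA (comp : G → Submodule ℝ D) : Prop :=
  DirectSum.IsInternal comp ∧ (1 : D) ∈ comp 1 ∧
    (∀ (g h : G) (a b : D), a ∈ comp g → b ∈ comp h → a * b ∈ comp (g * h)) ∧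
    ∀ (g : G) (a : D), a ∈ comp g → a ≠ 0 → IsUnit a

/-- `t` belongs to `K`, i.e. `Int(X_t)` restricts to the identity on `D_e`. -/
def Kmem (comp : G → Submodule ℝ D) {T : Subgroup G} (X : ↥T → Dˣ) (t : ↥T) : Prop :=
  ∀ z ∈ comp (1 : G), (X t : D) * z = z * (X t : D)

theorem proj_spec {comp : G → Submodule ℝ D} (hin : DirectSum.IsInternal comp) :
    ∃ p : G → D →ₗ[ℝ] D,
      (∀ g x, p g x ∈ comp g) ∧ (∀ g x, x ∈ comp g → p g x = x) ∧
      (∀ g h x, x ∈ comp g → g ≠ h → p h x = 0) := by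
  set e := (LinearEquiv.ofBijective (DirectSum.coeLinearMap comp) hin).symm with he
  refine ⟨fun g =>
    ({ toFun := fun x => (e x g : D)
       map_add' := by intro x y; show ((e (x+y)) g : D) = _; rw [map_add]; rfl
       map_smul' := by intro c x; show ((e (c • x)) g : D) = _; rw [map_smul]; rfl } : D →ₗ[ℝ] D), ?_, ?_, ?_⟩
  · intro g x; exact (e x g).2
  · intro g x hx
    simp only [LinearMap.coe_mk, AddHom.coe_mk, he]
    rw [hin.ofBijective_coeLinearMap_of_mem hx]
  · intro g h x hx hgh
    simp only [LinearMap.coe_mk, AddHom.coe_mk, he]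
    rw [hin.ofBijective_coeLinearMap_of_mem_ne hgh hx]
    rfl

theorem inv_mem_comp {comp : G → Submodule ℝ D} (hin : DirectSum.IsInternal comp)
    (hone : (1 : D) ∈ comp 1)
    (hmul : ∀ (g h : G) (a b : D), a ∈ comp g → b ∈ comp h → a * b ∈ comp (g * h))
    {g : G} {a b : D} (ha : a ∈ comp g) (hab : a * b = 1) (hba : b * a = 1) :
    b ∈ comp g⁻¹ := by
  obtain ⟨p, hpmem, hpeq, hpne⟩ := proj_spec hin
  have key : ∀ x : D, a * p g⁻¹ x = p 1 (a * x) := by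
    intro x
    have hx : x ∈ ⨆ i, comp i := hin.submodule_iSup_eq_top ▸ Submodule.mem_top
    refine Submodule.iSup_induction (motive := fun y => a * p g⁻¹ y = p 1 (a * y)) comp hx ?_ ?_ ?_
    · intro k y hy
      by_cases hk : k = g⁻¹
      · subst hk
        have hmem : a * y ∈ comp 1 := by
          have := hmul g g⁻¹ a y ha hy
          rwa [mul_inv_cancel] at this
        rw [hpeq _ _ hy, hpeq 1 _ hmem]
      · rw [hpne k g⁻¹ y hy hk, mul_zero]
        have hne : g * k ≠ 1 := by
          intro hc
          exact hk (by rw [eq_inv_of_mul_eq_one_right hc] )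
        rw [hpne (g * k) 1 (a * y) (hmul g k a y ha hy) hne]
    · show a * p g⁻¹ (0:D) = p 1 (a * 0)
      rw [mul_zero, map_zero, mul_zero, map_zero]
    · intro y z hy hz
      rw [mul_add, map_add, map_add, mul_add, hy, hz]
  have h1 := key b
  rw [hab, hpeq 1 1 hone] at h1
  have hb : b = p g⁻¹ b := by
    calc b = b * (a * p g⁻¹ b) := by rw [h1, mul_one]
    _ = b * a * p g⁻¹ b := by rw [mul_assoc]
    _ = p g⁻¹ b := by rw [hba, one_mul]
  rw [hb]; exact hpmem _ _


set_option maxHeartbeats 1600000 in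
/-- If `ℂ ≅ D_e ⊄ Z(D)` (here: `D_e` is commutative of real dimension 2 but not
central in `D`) and `D` admits a degree-preserving involution restricting to the
conjugation on `D_e`, then `X_t²` is central for every `t ∈ T ∖ K`. -/
theorem stmt_8 (comp : G → Submodule ℝ D) (hgda : IsGDA comp)
    (hfd : FiniteDimensional ℝ ↥(comp (1 : G)))
    -- `D_e ≅ ℂ`
    (hcomm : ∀ z ∈ comp (1 : G), ∀ w ∈ comp (1 : G), z * w = w * z)
    (hrank : Module.finrank ℝ ↥(comp (1 : G)) = 2)
    -- `D_e` is not contained in the center of `D`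
    (hnotcentral : ¬∀ z ∈ comp (1 : G), ∀ x : D, z * x = x * z)
    (T : Subgroup G) (hT : ∀ g : G, comp g ≠ ⊥ ↔ g ∈ T)
    (X : ↥T → Dˣ) (hX : ∀ t : ↥T, (X t : D) ∈ comp (t : G))
    (φ : D ≃ₗ[ℝ] D)
    (hanti : ∀ x y : D, φ (x * y) = φ y * φ x)
    (hinvol : ∀ x : D, φ (φ x) = x)
    (hgr : ∀ (g : G), ∀ x ∈ comp g, φ x ∈ comp g)
    (hconj : ∀ z ∈ comp (1 : G),
      (∃ r : ℝ, z + φ z = algebraMap ℝ D r) ∧ ∃ r : ℝ, 0 ≤ r ∧ z * φ z = algebraMap ℝ D r)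
    (η : ↥T → ℝ) (hη : ∀ t : ↥T, η t = 1 ∨ η t = -1)
    (hφX : ∀ t : ↥T, φ (X t : D) = η t • (X t : D)) :
    ∀ t : ↥T, ¬Kmem comp X t → ∀ x : D, (X t : D) * (X t : D) * x = x * ((X t : D) * (X t : D)) := by
  obtain ⟨hin, hone, hmul, hunit⟩ := hgda
  -- a noncentral element of `D_e`
  push_neg at hnotcentral
  obtain ⟨z₀, hz₀mem, x₀, hzx₀⟩ := hnotcentral
  haveI : Nontrivial D := ⟨⟨z₀ * x₀, x₀ * z₀, hzx₀⟩⟩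
  have hinj : Function.Injective (algebraMap ℝ D) := (algebraMap ℝ D).injective
  -- scalar cancellation against units
  have hcan : ∀ (c : ℝ) (u : Dˣ), c • (u : D) = 0 → c = 0 := by
    intro c u h
    have h2 : algebraMap ℝ D c * u = 0 := by rw [← Algebra.smul_def]; exact h
    have h3 : algebraMap ℝ D c = 0 := by
      calc algebraMap ℝ D c = algebraMap ℝ D c * u * ↑u⁻¹ := by
            rw [mul_assoc, Units.mul_inv, mul_one]
      _ = 0 := by rw [h2, zero_mul]
    have : algebraMap ℝ D c = algebraMap ℝ D 0 := by rw [h3, map_zero]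
    exact hinj this
  have hcan2 : ∀ (c d : ℝ) (u : Dˣ), c • (u : D) = d • (u : D) → c = d := by
    intro c d u h
    have := hcan (c - d) u (by rw [sub_smul, h, sub_self])
    linarith
  -- φ 1 = 1
  have hφ1 : φ (1 : D) = 1 := by
    have hm : φ 1 ∈ comp 1 := hgr 1 1 hone
    have hne : φ (1 : D) ≠ 0 := by
      intro h
      have := congrArg φ h
      rw [hinvol, map_zero] at this
      exact one_ne_zero this
    have hu := hunit 1 (φ 1) hm hne
    have hsq : φ 1 * φ 1 = φ 1 * 1 := by rw [← hanti, one_mul, mul_one]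
    exact hu.mul_left_cancel hsq
  -- quadratic relation on `D_e`
  have hquad : ∀ z ∈ comp (1 : G), ∃ r s : ℝ, 0 ≤ s ∧ z * z = r • z - s • (1 : D) := by
    intro z hz
    obtain ⟨⟨r, hr⟩, ⟨s, hs0, hs⟩⟩ := hconj z hz
    refine ⟨r, s, hs0, ?_⟩
    have hφz : φ z = r • (1 : D) - z := by
      have h1 : z + φ z = r • (1 : D) := by rw [hr, Algebra.algebraMap_eq_smul_one]
      exact eq_sub_of_add_eq' h1
    have h2 : z * φ z = s • (1 : D) := by rw [hs, Algebra.algebraMap_eq_smul_one]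
    rw [hφz, mul_sub, mul_smul_comm, mul_one] at h2
    rw [← h2]
    exact (sub_sub_cancel _ _).symm
  -- construct a square root of -1 in D_e
  have hz₀span : z₀ ∉ Submodule.span ℝ {(1 : D)} := by
    intro hmem
    rw [Submodule.mem_span_singleton] at hmem
    obtain ⟨c, hc⟩ := hmem
    exact hzx₀ (by rw [← hc, smul_mul_assoc, one_mul, mul_smul_comm, mul_one])
  obtain ⟨r₀, s₀, hs₀, hq₀⟩ := hquad z₀ hz₀mem
  set u : D := z₀ - (r₀ / 2) • 1 with hu
  have humem : u ∈ comp 1 := sub_mem hz₀mem (Submodule.smul_mem _ _ hone)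
  have hzu : z₀ = u + (r₀ / 2) • 1 := by rw [hu]; abel
  have hune : u ≠ 0 := by
    intro h
    apply hz₀span
    rw [Submodule.mem_span_singleton]
    refine ⟨r₀ / 2, ?_⟩
    rw [hzu, h, zero_add]
  set cc : ℝ := r₀ ^ 2 / 4 - s₀ with hcc
  have huu : u * u = cc • 1 := by
    rw [hu, sub_mul, mul_sub, mul_sub, hq₀]
    simp only [smul_mul_assoc, mul_smul_comm, one_mul, mul_one, smul_smul]
    match_scalars <;> ring
  have hccneg : cc < 0 := by
    rcases lt_or_ge cc 0 with h | h
    · exact h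
    exfalso
    set q := Real.sqrt cc with hq
    have hq2 : q * q = cc := Real.mul_self_sqrt h
    have hfac : (u - q • 1) * (u + q • 1) = 0 := by
      rw [sub_mul, mul_add, mul_add, huu]
      simp only [smul_mul_assoc, mul_smul_comm, one_mul, mul_one, smul_smul]
      rw [hq2]
      match_scalars <;> ring
    have hm1 : u - q • (1 : D) ∈ comp 1 := sub_mem humem (Submodule.smul_mem _ _ hone)
    apply hz₀span
    rw [Submodule.mem_span_singleton]
    by_cases h1 : u - q • (1 : D) = 0
    · refine ⟨q + r₀ / 2, ?_⟩
      rw [hzu, (sub_eq_zero.mp h1 : u = q • (1:D)), ← add_smul]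
    · obtain ⟨v, hv⟩ := hunit 1 _ hm1 h1
      have h0 : u + q • (1 : D) = 0 := by
        calc u + q • (1:D) = ↑v⁻¹ * (↑v * (u + q • (1:D))) := by
              rw [← mul_assoc, Units.inv_mul, one_mul]
        _ = ↑v⁻¹ * ((u - q • (1:D)) * (u + q • (1:D))) := by rw [hv]
        _ = 0 := by rw [hfac, mul_zero]
      refine ⟨-q + r₀ / 2, ?_⟩
      have hu' : u = (-q) • (1 : D) := by
        rw [neg_smul]
        exact eq_neg_of_add_eq_zero_left h0
      rw [hzu, hu', ← add_smul]
  set ii : D := (Real.sqrt (-cc))⁻¹ • u with hii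
  have hiimem : ii ∈ comp 1 := Submodule.smul_mem _ _ humem
  have hsq : Real.sqrt (-cc) * Real.sqrt (-cc) = -cc := Real.mul_self_sqrt (by linarith)
  have hsqne : Real.sqrt (-cc) ≠ 0 := by
    intro h
    rw [h, mul_zero] at hsq
    linarith
  have hi2 : ii * ii = -1 := by
    rw [hii, smul_mul_assoc, mul_smul_comm, smul_smul, huu, smul_smul]
    have hscal : (Real.sqrt (-cc))⁻¹ * (Real.sqrt (-cc))⁻¹ * cc = -1 := by
      field_simp
      nlinarith [hsq]
    rw [hscal, neg_smul, one_smul]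
  -- φ acts as conjugation: φ ii = -ii
  have hφimem : φ ii ∈ comp 1 := hgr 1 ii hiimem
  have hφi : φ ii = -ii := by
    have hφi2 : φ ii * φ ii = -1 := by rw [← hanti, hi2, map_neg, hφ1]
    have hfac : (φ ii - ii) * (φ ii + ii) = 0 := by
      rw [sub_mul, mul_add, mul_add, hφi2, hi2, hcomm (φ ii) hφimem ii hiimem]
      abel
    by_cases h1 : φ ii - ii = 0
    · exfalso
      obtain ⟨_, ⟨s, hs0, hs⟩⟩ := hconj ii hiimem
      rw [(sub_eq_zero.mp h1 : φ ii = ii), hi2] at hs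
      have : algebraMap ℝ D (-1) = algebraMap ℝ D s := by
        rw [← hs, map_neg, map_one]
      have := hinj this
      linarith
    · obtain ⟨v, hv⟩ := hunit 1 _ (sub_mem hφimem hiimem) h1
      have h0 : φ ii + ii = 0 := by
        calc φ ii + ii = ↑v⁻¹ * (↑v * (φ ii + ii)) := by
              rw [← mul_assoc, Units.inv_mul, one_mul]
        _ = ↑v⁻¹ * ((φ ii - ii) * (φ ii + ii)) := by rw [hv]
        _ = 0 := by rw [hfac, mul_zero]
      exact eq_neg_of_add_eq_zero_left h0
  -- every element of D_e is a • 1 + b • ii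
  have hspan : ∀ z ∈ comp (1 : G), ∃ a b : ℝ, z = a • (1 : D) + b • ii := by
    intro z hz
    have hφzmem : φ z ∈ comp 1 := hgr 1 z hz
    obtain ⟨⟨r, hr⟩, -⟩ := hconj z hz
    have hzi : z * ii ∈ comp 1 := by
      have := hmul 1 1 z ii hz hiimem
      rwa [mul_one] at this
    obtain ⟨⟨r', hr'⟩, -⟩ := hconj (z * ii) hzi
    rw [hanti, hφi, neg_mul, hcomm ii hiimem (φ z) hφzmem] at hr'
    -- hr' : z * ii + -(φ z * ii) = algebraMap r'
    have h1 : (z - φ z) * ii = r' • (1 : D) := by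
      rw [sub_mul, sub_eq_add_neg, hr', Algebra.algebraMap_eq_smul_one]
    have hzφ : z - φ z = (-r') • ii := by
      have h2 : (z - φ z) * (ii * ii) = (r' • (1 : D)) * ii := by
        rw [← mul_assoc, h1]
      rw [hi2, mul_neg_one, smul_mul_assoc, one_mul] at h2
      rw [neg_smul]
      exact neg_eq_iff_eq_neg.mp h2
    have hzφ2 : z + φ z = r • (1 : D) := by rw [hr, Algebra.algebraMap_eq_smul_one]
    refine ⟨r / 2, -r' / 2, ?_⟩
    have h3 : z + z = r • (1 : D) + (-r') • ii := by
      rw [← hzφ2, ← hzφ]; abel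
    have h4 : (2 : ℝ) • z = (2 : ℝ) • ((r / 2) • (1 : D) + (-r' / 2) • ii) := by
      rw [two_smul, h3]
      module
    exact smul_right_injective D (two_ne_zero : (2 : ℝ) ≠ 0) h4
  -- main argument
  intro t hK
  set A : D := (X t : D) with hA
  set Ainv : D := (((X t)⁻¹ : Dˣ) : D) with hAinvdef
  have hAinv_mem : Ainv ∈ comp ((t : G))⁻¹ :=
    inv_mem_comp hin hone hmul (hX t) (Units.mul_inv _) (Units.inv_mul _)
  have hAAinv : A * Ainv = 1 := Units.mul_inv _
  have hAinvA : Ainv * A = 1 := Units.inv_mul _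
  -- conjugation by X_t sends ii to -ii
  have hjmem : A * ii * Ainv ∈ comp 1 := by
    have h1 := hmul _ _ _ _ (hmul _ _ _ _ (hX t) hiimem) hAinv_mem
    have e : (t : G) * 1 * (t : G)⁻¹ = 1 := by group
    rwa [e] at h1
  have hj2 : (A * ii * Ainv) * (A * ii * Ainv) = -1 := by
    have h1 : Ainv * (A * ii * Ainv) = ii * Ainv := by
      rw [← mul_assoc, ← mul_assoc, hAinvA, one_mul]
    calc (A * ii * Ainv) * (A * ii * Ainv) = (A * ii) * (Ainv * (A * ii * Ainv)) := by
          rw [mul_assoc]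
    _ = (A * ii) * (ii * Ainv) := by rw [h1]
    _ = A * ((ii * ii) * Ainv) := by rw [mul_assoc, ← mul_assoc ii ii Ainv]
    _ = -(A * Ainv) := by rw [hi2, neg_one_mul, mul_neg]
    _ = -1 := by rw [hAAinv]
  have hfacj : ((A * ii * Ainv) - ii) * ((A * ii * Ainv) + ii) = 0 := by
    rw [sub_mul, mul_add, mul_add, hj2, hi2, hcomm _ hjmem ii hiimem]
    abel
  have hji : A * ii * Ainv = -ii := by
    by_cases h1 : (A * ii * Ainv) - ii = 0
    · exfalso
      apply hK
      have hAi : A * ii = ii * A := by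
        have h2 : A * ii * Ainv = ii := sub_eq_zero.mp h1
        calc A * ii = (A * ii * Ainv) * A := by rw [mul_assoc, hAinvA, mul_one]
        _ = ii * A := by rw [h2]
      intro z hz
      obtain ⟨a, b, hab⟩ := hspan z hz
      rw [hab, mul_add, add_mul, mul_smul_comm, mul_smul_comm, smul_mul_assoc, smul_mul_assoc,
        mul_one, one_mul, hAi]
    · obtain ⟨v, hv⟩ := hunit 1 _ (sub_mem hjmem hiimem) h1
      have h0 : (A * ii * Ainv) + ii = 0 := by
        calc (A * ii * Ainv) + ii = ↑v⁻¹ * (↑v * ((A * ii * Ainv) + ii)) := by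
              rw [← mul_assoc, Units.inv_mul, one_mul]
        _ = ↑v⁻¹ * (((A * ii * Ainv) - ii) * ((A * ii * Ainv) + ii)) := by rw [hv]
        _ = 0 := by rw [hfacj, mul_zero]
      exact eq_neg_of_add_eq_zero_left h0
  have hAii : A * ii = -(ii * A) := by
    calc A * ii = (A * ii * Ainv) * A := by rw [mul_assoc, hAinvA, mul_one]
    _ = -ii * A := by rw [hji]
    _ = -(ii * A) := by rw [neg_mul]
  -- X_t² commutes with ii, hence with D_e
  have hYii : (A * A) * ii = ii * (A * A) := by
    calc (A * A) * ii = A * (A * ii) := by rw [mul_assoc]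
    _ = -(A * (ii * A)) := by rw [hAii, mul_neg]
    _ = -((A * ii) * A) := by rw [mul_assoc]
    _ = -(-(ii * A) * A) := by rw [hAii]
    _ = (ii * A) * A := by rw [neg_mul, neg_neg]
    _ = ii * (A * A) := by rw [mul_assoc]
  have hYz : ∀ z ∈ comp (1 : G), (A * A) * z = z * (A * A) := by
    intro z hz
    obtain ⟨a, b, hab⟩ := hspan z hz
    rw [hab, mul_add, add_mul, mul_smul_comm, mul_smul_comm, smul_mul_assoc, smul_mul_assoc,
      mul_one, one_mul, hYii]
  -- X_t² commutes with each X_s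
  have hYX : ∀ s : ↥T, (A * A) * (X s : D) = (X s : D) * (A * A) := by
    intro s
    set B : D := (X s : D) with hB
    set V : Dˣ := X s * X t with hV
    have hVval : (V : D) = B * A := Units.val_mul _ _
    have hVmem : (V : D) ∈ comp ((s : G) * t) := by
      rw [hVval]; exact hmul _ _ _ _ (hX s) (hX t)
    have hVinv : ((V⁻¹ : Dˣ) : D) ∈ comp ((s : G) * (t : G))⁻¹ :=
      inv_mem_comp hin hone hmul hVmem (Units.mul_inv _) (Units.inv_mul _)
    set w : D := (A * B) * ↑V⁻¹ with hw
    have hwmem : w ∈ comp 1 := by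
      have h1 := hmul _ _ _ _ (hmul _ _ _ _ (hX t) (hX s)) hVinv
      have e : ((t : G) * s) * ((s : G) * t)⁻¹ = 1 := by
        rw [mul_comm (s : G) (t : G), mul_inv_cancel]
      rwa [e] at h1
    have hwBA : w * (B * A) = A * B := by
      calc w * (B * A) = (A * B) * (↑V⁻¹ * (B * A)) := by rw [hw, mul_assoc]
      _ = (A * B) * (↑V⁻¹ * ↑V) := by rw [hVval]
      _ = A * B := by rw [Units.inv_mul, mul_one]
    obtain ⟨a, b, hab⟩ := hspan w hwmem
    have hAw : A * w = (a • (1 : D) - b • ii) * A := by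
      rw [hab, mul_add, sub_mul, mul_smul_comm, mul_smul_comm, mul_one, smul_mul_assoc,
        smul_mul_assoc, one_mul, hAii, smul_neg]
      abel
    set ρ : ℝ := a ^ 2 + b ^ 2 with hρ
    have hww : (a • (1 : D) - b • ii) * w = ρ • 1 := by
      rw [hab, sub_mul, mul_add, mul_add]
      simp only [smul_mul_assoc, mul_smul_comm, smul_smul, one_mul, mul_one]
      rw [hi2]
      match_scalars <;> ring
    have hrel1 : (A * A) * B = ρ • (B * (A * A)) := by
      calc (A * A) * B = A * (A * B) := mul_assoc A A B
      _ = A * (w * (B * A)) := by rw [hwBA]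
      _ = (A * w) * (B * A) := (mul_assoc A w (B * A)).symm
      _ = ((a • (1 : D) - b • ii) * A) * (B * A) := by rw [hAw]
      _ = (a • (1 : D) - b • ii) * (A * (B * A)) := mul_assoc _ A (B * A)
      _ = (a • (1 : D) - b • ii) * ((A * B) * A) := by rw [mul_assoc A B A]
      _ = (a • (1 : D) - b • ii) * ((w * (B * A)) * A) := by rw [hwBA]
      _ = (a • (1 : D) - b • ii) * (w * ((B * A) * A)) := by rw [mul_assoc w (B * A) A]
      _ = ((a • (1 : D) - b • ii) * w) * ((B * A) * A) := (mul_assoc _ w _).symm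
      _ = (ρ • (1 : D)) * ((B * A) * A) := by rw [hww]
      _ = (ρ • (1 : D)) * (B * (A * A)) := by rw [mul_assoc B A A]
      _ = ρ • (B * (A * A)) := by rw [smul_mul_assoc, one_mul]
    have hηt2 : η t * η t = 1 := by rcases hη t with h | h <;> rw [h] <;> norm_num
    have hφY : φ (A * A) = A * A := by
      rw [hanti, hφX t, smul_mul_assoc, mul_smul_comm, smul_smul, hηt2, one_smul]
    have h2 : φ ((A * A) * B) = η s • (B * (A * A)) := by
      rw [hanti, hφX s, smul_mul_assoc, hφY]
    have h3 : φ ((A * A) * B) = ((ρ * η s) * ρ) • (B * (A * A)) := by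
      rw [hrel1, map_smul, hanti, hφY, hφX s, mul_smul_comm, smul_smul, hrel1, smul_smul]
    have hρ1 : ρ = 1 := by
      set U : Dˣ := X s * (X t * X t) with hU
      have hUval : (U : D) = B * (A * A) := by
        rw [hU, Units.val_mul, Units.val_mul]
      have hcanc : η s = (ρ * η s) * ρ := by
        apply hcan2 (η s) ((ρ * η s) * ρ) U
        rw [hUval, ← h2, ← h3]
      have hρ0 : (0 : ℝ) ≤ ρ := by positivity
      rcases hη s with h | h <;> rw [h] at hcanc <;> nlinarith [hcanc]
    rw [hrel1, hρ1, one_smul]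
  -- conclude for arbitrary x
  intro x
  have hx : x ∈ ⨆ g, comp g := hin.submodule_iSup_eq_top ▸ Submodule.mem_top
  refine Submodule.iSup_induction (motive := fun y => A * A * y = y * (A * A)) comp hx ?_ ?_ ?_
  · intro g y hy
    by_cases hg : comp g = ⊥
    · have hy0 : y = 0 := by rw [hg] at hy; simpa using hy
      rw [hy0, mul_zero, zero_mul]
    · have hgT : g ∈ T := (hT g).1 hg
      have hBinv : (((X ⟨g, hgT⟩)⁻¹ : Dˣ) : D) ∈ comp (g⁻¹) :=
        inv_mem_comp hin hone hmul (hX ⟨g, hgT⟩) (Units.mul_inv _) (Units.inv_mul _)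
      set B : D := (X ⟨g, hgT⟩ : D) with hB
      set z : D := y * ↑(X ⟨g, hgT⟩)⁻¹ with hz
      have hzmem : z ∈ comp 1 := by
        have := hmul _ _ _ _ hy hBinv
        rwa [mul_inv_cancel] at this
      have hzB : z * B = y := by rw [hz, mul_assoc, Units.inv_mul, mul_one]
      calc A * A * y = (A * A) * (z * B) := by rw [hzB]
      _ = ((A * A) * z) * B := (mul_assoc _ z B).symm
      _ = (z * (A * A)) * B := by rw [hYz z hzmem]
      _ = z * ((A * A) * B) := mul_assoc z _ B
      _ = z * (B * (A * A)) := by rw [hYX ⟨g, hgT⟩]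
      _ = (z * B) * (A * A) := (mul_assoc z B _).symm
      _ = y * (A * A) := by rw [hzB]
  · show A * A * (0 : D) = (0 : D) * (A * A)
    rw [mul_zero, zero_mul]
  · intro y z hy hz
    show A * A * (y + z) = (y + z) * (A * A)
    rw [mul_add, add_mul, hy, hz]
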